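/- Let A be a weighted directed graph on n vertices that is weakly connected with total edge weight W = ∑ i, ∑ j, A i j > 0, and let b be the orthogonal projection of d onto the kernel of L. Then b i ≥ 0 for every vertex i, and the forward democracy coefficient satisfies η_f(A) = (∑ i, b i) / (∑ i, d i). -/

import Mathlib

open Matrix BigOperators

noncomputable section

variable {n : ℕ}

/-- Weighted in-degree vector. -/
def indeg (A : Matrix (Fin n) (Fin n) ℝ) (j : Fin n) : ℝ := ∑ i, A i j

/-- Weighted out-degree vector. -/
def outdeg (A : Matrix (Fin n) (Fin n) ℝ) (i : Fin n) : ℝ := ∑ j, A i j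

/-- Weighted in-degree Laplacian `L = diag d - A`. -/
def inLap (A : Matrix (Fin n) (Fin n) ℝ) : Matrix (Fin n) (Fin n) ℝ :=
  Matrix.diagonal (indeg A) - A

/-- Reachability: reflexive-transitive closure of the edge relation. -/
def Reaches (A : Matrix (Fin n) (Fin n) ℝ) : Fin n → Fin n → Prop :=
  Relation.ReflTransGen fun i j => 0 < A i j

/-- Weak connectivity. -/
def WeaklyConnected (A : Matrix (Fin n) (Fin n) ℝ) : Prop :=
  ∀ i j : Fin n, Relation.ReflTransGen (fun i j => 0 < A i j ∨ 0 < A j i) i j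

/-- Strong connectivity. -/
def StronglyConnected (A : Matrix (Fin n) (Fin n) ℝ) : Prop :=
  ∀ i j : Fin n, Reaches A i j

/-- Simply forward influenced graph. -/
def SimplyForwardInfluenced (A : Matrix (Fin n) (Fin n) ℝ) : Prop :=
  (∃ i, indeg A i = 0) ∧ (∃ i, indeg A i ≠ 0) ∧
    ∀ j, indeg A j ≠ 0 → ∃ i, indeg A i = 0 ∧ Reaches A i j

/-- A set of vertices with no incoming edges from outside. -/
def InClosed (A : Matrix (Fin n) (Fin n) ℝ) (S : Finset (Fin n)) : Prop :=
  ∀ i j : Fin n, i ∉ S → j ∈ S → A i j = 0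

/-- Minimal source subgraph. -/
def MinSourceSubgraph (A : Matrix (Fin n) (Fin n) ℝ) (S : Finset (Fin n)) : Prop :=
  S.Nonempty ∧ InClosed A S ∧ ∀ T ⊆ S, T.Nonempty → T ≠ S → ¬ InClosed A T

/-- Total edge weight. -/
def totalWeight (A : Matrix (Fin n) (Fin n) ℝ) : ℝ := ∑ i, ∑ j, A i j

/-- `g` is a forward hierarchical level vector: a minimizer of `‖Lᵀ x - d‖₂`. -/
def IsFHL (A : Matrix (Fin n) (Fin n) ℝ) (g : Fin n → ℝ) : Prop :=
  ∀ x : Fin n → ℝ,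
    ∑ i, ((inLap A)ᵀ.mulVec g i - indeg A i) ^ 2 ≤
      ∑ i, ((inLap A)ᵀ.mulVec x i - indeg A i) ^ 2

/-- Forward democracy coefficient, computed from a forward hierarchical level vector `g`. -/
def etaF (A : Matrix (Fin n) (Fin n) ℝ) (g : Fin n → ℝ) : ℝ :=
  1 - (∑ i, ∑ j, A i j * (g j - g i)) / totalWeight A

/-- Forward influence centrality of a vertex, from a forward hierarchical level vector `g`. -/
def vF (A : Matrix (Fin n) (Fin n) ℝ) (g : Fin n → ℝ) (i : Fin n) : ℝ :=
  if indeg A i = 0 then 1 else 1 - (∑ k, A k i * (g i - g k)) / indeg A i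

/-- `b` is the orthogonal projection of `d` onto `ker L` (standard Euclidean inner product). -/
def IsProjKerL (A : Matrix (Fin n) (Fin n) ℝ) (b : Fin n → ℝ) : Prop :=
  (inLap A).mulVec b = 0 ∧
    ∀ x : Fin n → ℝ, (inLap A).mulVec x = 0 → ∑ i, (indeg A i - b i) * x i = 0

lemma mulVec_inLap (A : Matrix (Fin n) (Fin n) ℝ) (x : Fin n → ℝ) (i : Fin n) :
    (inLap A).mulVec x i = indeg A i * x i - ∑ j, A i j * x j := by
  simp only [inLap, mulVec, dotProduct, Matrix.sub_apply, sub_mul, Finset.sum_sub_distrib]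
  congr 1
  simp [diagonal, Finset.sum_ite_eq, ite_mul]

lemma mulVecT_inLap (A : Matrix (Fin n) (Fin n) ℝ) (x : Fin n → ℝ) (i : Fin n) :
    (inLap A)ᵀ.mulVec x i = indeg A i * x i - ∑ j, A j i * x j := by
  simp only [inLap, mulVec, dotProduct, transpose_apply, Matrix.sub_apply, sub_mul, Finset.sum_sub_distrib]
  congr 1
  simp [diagonal, ite_mul]

lemma sum_mulVec_inLap (A : Matrix (Fin n) (Fin n) ℝ) (x : Fin n → ℝ) :
    ∑ i, (inLap A).mulVec x i = 0 := by
  simp only [mulVec_inLap]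
  rw [Finset.sum_sub_distrib, Finset.sum_comm]
  simp [indeg, Finset.sum_mul]

lemma pospart_ker (A : Matrix (Fin n) (Fin n) ℝ) (hA : ∀ i j, 0 ≤ A i j)
    (x : Fin n → ℝ) (hx : (inLap A).mulVec x = 0) :
    (inLap A).mulVec (fun i => max (x i) 0) = 0 := by
  set y : Fin n → ℝ := fun i => max (x i) 0 with hy
  have hle : ∀ i, (inLap A).mulVec y i ≤ 0 := by
    intro i
    rw [mulVec_inLap]
    rcases le_or_gt 0 (x i) with h | h
    · have hyi : y i = x i := max_eq_left h
      have hxi := congrFun hx i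
      rw [Pi.zero_apply, mulVec_inLap] at hxi
      have key : indeg A i * y i - ∑ j, A i j * y j
          = (indeg A i * x i - ∑ j, A i j * x j) - ∑ j, A i j * (y j - x j) := by
        rw [hyi, sub_sub, ← Finset.sum_add_distrib]
        congr 1
        exact Finset.sum_congr rfl fun j _ => by ring
      rw [key, hxi, zero_sub, neg_nonpos]
      exact Finset.sum_nonneg fun j _ => mul_nonneg (hA i j)
        (by simp only [hy]; exact sub_nonneg.mpr (le_max_left _ _))
    · have hyi : y i = 0 := max_eq_right h.le
      rw [hyi, mul_zero, zero_sub, neg_nonpos]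
      exact Finset.sum_nonneg fun j _ => mul_nonneg (hA i j) (le_max_right _ _)
  have hsum := sum_mulVec_inLap A y
  funext i
  rw [Pi.zero_apply]
  have := (Finset.sum_eq_zero_iff_of_nonpos (fun i _ => hle i)).mp hsum i (Finset.mem_univ i)
  exact this

lemma normal_eq (A : Matrix (Fin n) (Fin n) ℝ) (g : Fin n → ℝ) (hg : IsFHL A g) :
    (inLap A).mulVec (fun i => (inLap A)ᵀ.mulVec g i - indeg A i) = 0 := by
  set r : Fin n → ℝ := fun i => (inLap A)ᵀ.mulVec g i - indeg A i with hr
  have key : ∀ v : Fin n → ℝ, ∑ i, r i * (inLap A)ᵀ.mulVec v i = 0 := by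
    intro v
    set w : Fin n → ℝ := fun i => (inLap A)ᵀ.mulVec v i with hw
    set c : ℝ := ∑ i, r i * w i with hc
    set q : ℝ := ∑ i, w i ^ 2 with hq
    have hq0 : 0 ≤ q := Finset.sum_nonneg fun i _ => sq_nonneg _
    have hineq : ∀ t : ℝ, 0 ≤ 2 * t * c + t ^ 2 * q := by
      intro t
      have h := hg (g + t • v)
      have hexp : ∀ i, (inLap A)ᵀ.mulVec (g + t • v) i - indeg A i = r i + t * w i := by
        intro i
        rw [mulVec_add, mulVec_smul]
        simp [hr, hw]
        ring
      have h2 : ∑ i, ((inLap A)ᵀ.mulVec (g + t • v) i - indeg A i) ^ 2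
          = ∑ i, r i ^ 2 + (2 * t * c + t ^ 2 * q) := by
        simp only [hexp]
        rw [hc, hq, Finset.mul_sum, Finset.mul_sum, ← Finset.sum_add_distrib,
          ← Finset.sum_add_distrib]
        exact Finset.sum_congr rfl fun i _ => by ring
      rw [h2] at h
      linarith
    have h := hineq (-c / (q + 1))
    have hq1 : (0:ℝ) < q + 1 := by linarith
    have hne : q + 1 ≠ 0 := ne_of_gt hq1
    have e : 2 * (-c / (q + 1)) * c + (-c / (q + 1)) ^ 2 * q
        = -(c ^ 2 * (q + 2)) / (q + 1) ^ 2 := by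
      field_simp
      ring
    rw [e] at h
    have hpos : (0:ℝ) < (q + 1) ^ 2 := by positivity
    rw [le_div_iff₀ hpos] at h
    have hc2 : c ^ 2 ≤ 0 := by nlinarith
    have : c = 0 := by
      have := le_antisymm hc2 (sq_nonneg c)
      exact pow_eq_zero_iff two_ne_zero |>.mp this
    exact this
  funext k
  have h := key (Pi.single k 1)
  rw [Pi.zero_apply]
  rw [← h]
  simp only [mulVec, dotProduct, transpose_apply, Pi.single_apply]
  refine Finset.sum_congr rfl fun i _ => ?_
  have hin : (∑ x1, inLap A x1 i * if x1 = k then 1 else 0) = inLap A k i := by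
    simp [mul_ite]
  rw [hin]
  ring

theorem stmt_11 (hn : 0 < n) (A : Matrix (Fin n) (Fin n) ℝ)
    (hA : ∀ i j, 0 ≤ A i j) (hdiag : ∀ i, A i i = 0)
    (hwc : WeaklyConnected A) (hW : 0 < totalWeight A)
    (g : Fin n → ℝ) (hg : IsFHL A g)
    (b : Fin n → ℝ) (hb : IsProjKerL A b) :
    (∀ i, 0 ≤ b i) ∧ etaF A g = (∑ i, b i) / (∑ i, indeg A i) := by
  have hd0 : ∀ i, 0 ≤ indeg A i := fun i => Finset.sum_nonneg fun k _ => hA k i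
  -- Part 1: b ≥ 0
  have hbpos : ∀ i, 0 ≤ b i := by
    intro i
    by_contra hneg
    push_neg at hneg
    set y : Fin n → ℝ := fun j => max (b j) 0 with hy
    have hky : (inLap A).mulVec y = 0 := pospart_ker A hA b hb.1
    have hkz : (inLap A).mulVec (fun j => y j - b j) = 0 := by
      have : (fun j => y j - b j) = y - b := rfl
      rw [this, mulVec_sub, hky, hb.1, sub_zero]
    have horth := hb.2 _ hkz
    have hterm : ∀ j ∈ Finset.univ, 0 ≤ (indeg A j - b j) * (y j - b j) := by
      intro j _
      rcases le_or_gt 0 (b j) with h | h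
      · have : y j = b j := max_eq_left h
        rw [this, sub_self, mul_zero]
      · have h1 : y j - b j = -b j := by rw [hy]; simp [max_eq_right h.le]
        rw [h1]
        exact mul_nonneg (by linarith [hd0 j]) (by linarith)
    have := (Finset.sum_eq_zero_iff_of_nonneg hterm).mp horth i (Finset.mem_univ i)
    have h1 : y i - b i = -b i := by rw [hy]; simp [max_eq_right hneg.le]
    rw [h1] at this
    have : (indeg A i - b i) * (-b i) > 0 :=
      mul_pos (by linarith [hd0 i]) (by linarith)
    linarith
  refine ⟨hbpos, ?_⟩
  -- Part 2: b = d - Lᵀ g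
  have hLr := normal_eq A g hg
  have hbeq : ∀ i, b i = indeg A i - (inLap A)ᵀ.mulVec g i := by
    set z : Fin n → ℝ := fun i => b i - (indeg A i - (inLap A)ᵀ.mulVec g i) with hz
    have hkz : (inLap A).mulVec z = 0 := by
      have hzz : z = b + fun i => (inLap A)ᵀ.mulVec g i - indeg A i := by
        funext i; simp [hz]; ring
      rw [hzz, mulVec_add, hb.1, hLr, add_zero]
    have h1 := hb.2 z hkz
    have h2 : ∑ i, (inLap A)ᵀ.mulVec g i * z i = 0 := by
      calc ∑ i, (inLap A)ᵀ.mulVec g i * z i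
          = ∑ i, ∑ j, inLap A j i * g j * z i := by
            refine Finset.sum_congr rfl fun i _ => ?_
            simp only [mulVec, dotProduct, transpose_apply, Finset.sum_mul]
        _ = ∑ j, ∑ i, inLap A j i * g j * z i := Finset.sum_comm
        _ = ∑ j, g j * (inLap A).mulVec z j := by
            refine Finset.sum_congr rfl fun j _ => ?_
            simp only [mulVec, dotProduct, Finset.mul_sum]
            exact Finset.sum_congr rfl fun i _ => by ring
        _ = 0 := by rw [hkz]; simp
    have h3 : ∑ i, z i ^ 2 = 0 := by
      calc ∑ i, z i ^ 2
          = ∑ i, (-((indeg A i - b i) * z i) + (inLap A)ᵀ.mulVec g i * z i) := by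
            refine Finset.sum_congr rfl fun i _ => ?_
            simp only [hz]
            ring
        _ = 0 := by
            rw [Finset.sum_add_distrib, Finset.sum_neg_distrib, h1, h2, neg_zero, add_zero]
    intro i
    have hz0 : z i = 0 := by
      have := (Finset.sum_eq_zero_iff_of_nonneg (fun j _ => sq_nonneg (z j))).mp h3 i
        (Finset.mem_univ i)
      exact pow_eq_zero_iff two_ne_zero |>.mp this
    have : b i - (indeg A i - (inLap A)ᵀ.mulVec g i) = 0 := hz0
    linarith
  -- Algebra
  have hsumd : ∑ i, indeg A i = totalWeight A := by
    rw [totalWeight]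
    exact Finset.sum_comm
  have hS : ∑ i, (inLap A)ᵀ.mulVec g i = ∑ i, ∑ j, A i j * (g j - g i) := by
    simp only [mulVecT_inLap]
    rw [Finset.sum_sub_distrib]
    have h1 : ∑ i, ∑ j, A i j * (g j - g i)
        = ∑ i, ∑ j, A i j * g j - ∑ i, ∑ j, A i j * g i := by
      rw [← Finset.sum_sub_distrib]
      refine Finset.sum_congr rfl fun i _ => ?_
      rw [← Finset.sum_sub_distrib]
      exact Finset.sum_congr rfl fun j _ => by ring
    rw [h1]
    congr 1
    · rw [Finset.sum_comm]
      refine Finset.sum_congr rfl fun i _ => ?_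
      rw [indeg, Finset.sum_mul]
    · rw [Finset.sum_comm]
  have hsumb : ∑ i, b i = totalWeight A - ∑ i, ∑ j, A i j * (g j - g i) := by
    rw [← hS, ← hsumd]
    rw [show ∑ i, b i = ∑ i, (indeg A i - (inLap A)ᵀ.mulVec g i) from
      Finset.sum_congr rfl fun i _ => hbeq i]
    rw [Finset.sum_sub_distrib]
  rw [etaF, hsumd, hsumb]
  have hWne : totalWeight A ≠ 0 := ne_of_gt hW
  field_simp
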